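/- For every n ≥ 2: if a(n−1) mod 4 > a(n+1) mod 4 and a(n) mod 4 ≥ a(n+2) mod 4, then 4·S(n) = a(n)·a(n+1) + 2, where S(n) = Σ_{k=0}^{n} a(k). -/

import Mathlib

/-- Sum of base-`d` digits of `n`. -/
def sdig (d n : ℕ) : ℕ := (Nat.digits d n).sum

/-- `t_d(n)`: base-`d` digit sum of `n`, reduced mod `d`. -/
def td (d n : ℕ) : ℕ := sdig d n % d

/-- `a_{j,d}(n)`: n-th natural (0-indexed, increasing) with base-`d` digit sum ≡ j mod d. -/
noncomputable def agen (d j n : ℕ) : ℕ := Nat.nth (fun k => sdig d k % d = j) n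

/-- n-th odious number (binary digit sum odd), 0-indexed increasing. -/
noncomputable def odious (n : ℕ) : ℕ := Nat.nth (fun k => (Nat.digits 2 k).sum % 2 = 1) n

/-- n-th evil number (binary digit sum even), 0-indexed increasing. -/
noncomputable def evil (n : ℕ) : ℕ := Nat.nth (fun k => (Nat.digits 2 k).sum % 2 = 0) n

/-- Thue–Morse sequence: parity of the binary digit sum. -/
def tm (n : ℕ) : ℕ := (Nat.digits 2 n).sum % 2

lemma tm_le (k : ℕ) : tm k ≤ 1 := Nat.lt_succ_iff.mp (Nat.mod_lt _ (by norm_num))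

lemma tm_two_mul (k : ℕ) : tm (2*k) = tm k := by
  rcases Nat.eq_zero_or_pos k with rfl | hk
  · rfl
  · unfold tm
    rw [Nat.digits_def' (by norm_num : 1 < 2) (by omega : 0 < 2*k)]
    simp [Nat.mul_div_cancel_left, Nat.mul_mod_right]

lemma tm_pair (k : ℕ) : tm (2*k) + tm (2*k+1) = 1 := by
  have h1 : tm (2*k+1) = (1 + (Nat.digits 2 k).sum) % 2 := by
    unfold tm
    rw [Nat.digits_def' (by norm_num : 1 < 2) (by omega : 0 < 2*k+1)]
    have h2 : (2*k+1) % 2 = 1 := by omega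
    have h3 : (2*k+1) / 2 = k := by omega
    rw [h2, h3]; simp
  have h0 := tm_two_mul k
  have : tm k = (Nat.digits 2 k).sum % 2 := rfl
  omega

def P : ℕ → Prop := fun k => (Nat.digits 2 k).sum % 2 = 1

instance : DecidablePred P := fun _ => by unfold P; infer_instance

lemma P_iff (k : ℕ) : P k ↔ tm k = 1 := Iff.rfl

lemma count_P (m : ℕ) : Nat.count P (2*m) = m := by
  induction m with
  | zero => simp
  | succ i ih =>
    have h2 : 2*(i+1) = (2*i+1)+1 := by ring
    rw [h2, Nat.count_succ, Nat.count_succ, ih]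
    have hp := tm_pair i
    have h1 := tm_le (2*i)
    by_cases h : tm (2*i) = 1
    · rw [if_pos ((P_iff _).mpr h), if_neg (by rw [P_iff]; omega)]
    · rw [if_neg (by rw [P_iff]; omega), if_pos ((P_iff _).mpr (by omega))]

lemma odious_eq (n : ℕ) : odious n + tm n = 2*n + 1 := by
  have hle := tm_le n
  have hpair := tm_pair n
  have ht2 := tm_two_mul n
  by_cases h : tm n = 1
  · have hpk : P (2*n) := (P_iff _).mpr (by omega)
    have := Nat.nth_count hpk
    rw [count_P n] at this
    have ho : odious n = 2*n := this
    omega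
  · have hpk : P (2*n+1) := (P_iff _).mpr (by omega)
    have hc : Nat.count P (2*n+1) = n := by
      rw [Nat.count_succ, count_P, if_neg (by rw [P_iff]; omega)]
      omega
    have := Nat.nth_count hpk
    rw [hc] at this
    have ho : odious n = 2*n+1 := this
    omega

lemma sum_tm (m : ℕ) : ∑ k ∈ Finset.range (2*m), tm k = m := by
  induction m with
  | zero => simp
  | succ i ih =>
    have h2 : 2*(i+1) = (2*i+1)+1 := by ring
    rw [h2, Finset.sum_range_succ, Finset.sum_range_succ, ih]
    have := tm_pair i
    omega

lemma sum_split (N : ℕ) : (∑ k ∈ Finset.range N, odious k) + (∑ k ∈ Finset.range N, tm k) = N^2 := by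
  rw [← Finset.sum_add_distrib]
  induction N with
  | zero => simp
  | succ i ih =>
    rw [Finset.sum_range_succ, ih, odious_eq]
    ring

theorem stmt18 (n : ℕ) (hn : 2 ≤ n)
    (h1 : odious (n + 1) % 4 < odious (n - 1) % 4)
    (h2 : odious (n + 2) % 4 ≤ odious n % 4) :
    4 * ∑ k ∈ Finset.range (n + 1), odious k = odious n * odious (n + 1) + 2 := by
  have e0 := odious_eq (n-1)
  have e1 := odious_eq n
  have e2 := odious_eq (n+1)
  have e3 := odious_eq (n+2)
  have l0 := tm_le (n-1); have l1 := tm_le n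
  have l2 := tm_le (n+1); have l3 := tm_le (n+2)
  rcases Nat.even_or_odd n with ⟨m, hm⟩ | ⟨m, hm⟩
  · -- n = 2m even
    have hm2 : n = 2*m := by omega
    have hp : tm n + tm (n+1) = 1 := by
      have := tm_pair m; rw [show 2*m = n by omega] at this; exact this
    -- from h1: tm (n+1) = 1, hence tm n = 0
    have htn : tm n = 0 := by omega
    have htn1 : tm (n+1) = 1 := by omega
    have hon : odious n = 4*m + 1 := by omega
    have hon1 : odious (n+1) = 4*m + 2 := by omega
    have hsplit := sum_split (n+1)
    have hst : ∑ k ∈ Finset.range (n+1), tm k = m := by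
      rw [Finset.sum_range_succ]
      have := sum_tm m; rw [show 2*m = n by omega] at this
      omega
    have hsq : (n+1)^2 = 4*m*m + 4*m + 1 := by rw [hm2]; ring
    have hS : ∑ k ∈ Finset.range (n+1), odious k = 4*m*m + 3*m + 1 := by omega
    rw [hS, hon, hon1]; ring
  · -- n = 2m+1 odd: contradiction
    exfalso
    have hp1 : tm (n-1) + tm n = 1 := by
      have := tm_pair m
      rw [show 2*m = n-1 by omega, show n-1+1 = n by omega] at this
      exact this
    have hp2 : tm (n+1) + tm (n+2) = 1 := by
      have := tm_pair (m+1)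
      rw [show 2*(m+1) = n+1 by omega] at this
      exact this
    omega
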